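/- For every integer k ≥ 1 there exists a constant K_k > 0 such that for all α ∈ (0, 1] and all ψ ∈ (0, 3π/4], the k-th derivative of F_α with respect to ψ satisfies |F_α^{(k)}(ψ)| ≤ K_k · α^{(1−k)/2}. -/

import Mathlib

open Real Metric


lemma norm_cosh_le (w : ℂ) : ‖Complex.cosh w‖ ≤ Real.exp ‖w‖ := by
  have h1 : Complex.cosh w = (Complex.exp w + Complex.exp (-w)) / 2 := rfl
  rw [h1]
  have h2 : ‖Complex.exp w + Complex.exp (-w)‖ ≤ Real.exp w.re + Real.exp (-w.re) := by
    refine (norm_add_le _ _).trans ?_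
    simp [Complex.norm_exp]
  have hre : |w.re| ≤ ‖w‖ := Complex.abs_re_le_norm w
  have h3 : Real.exp w.re ≤ Real.exp ‖w‖ := Real.exp_le_exp.mpr ((le_abs_self _).trans hre)
  have h4 : Real.exp (-w.re) ≤ Real.exp ‖w‖ := Real.exp_le_exp.mpr ((neg_le_abs _).trans hre)
  have h5 : ‖(Complex.exp w + Complex.exp (-w)) / 2‖ = ‖Complex.exp w + Complex.exp (-w)‖ / 2 := by
    rw [norm_div]; norm_num
  rw [h5]
  linarith

lemma norm_sinh_le (w : ℂ) : ‖Complex.sinh w‖ ≤ Real.exp ‖w‖ := by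
  have h1 : Complex.sinh w = (Complex.exp w - Complex.exp (-w)) / 2 := rfl
  rw [h1]
  have h2 : ‖Complex.exp w - Complex.exp (-w)‖ ≤ Real.exp w.re + Real.exp (-w.re) := by
    refine (norm_sub_le _ _).trans ?_
    simp [Complex.norm_exp]
  have hre : |w.re| ≤ ‖w‖ := Complex.abs_re_le_norm w
  have h3 : Real.exp w.re ≤ Real.exp ‖w‖ := Real.exp_le_exp.mpr ((le_abs_self _).trans hre)
  have h4 : Real.exp (-w.re) ≤ Real.exp ‖w‖ := Real.exp_le_exp.mpr ((neg_le_abs _).trans hre)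
  have h5 : ‖(Complex.exp w - Complex.exp (-w)) / 2‖ = ‖Complex.exp w - Complex.exp (-w)‖ / 2 := by
    rw [norm_div]; norm_num
  rw [h5]
  linarith

lemma norm_dslope_sinh_le (w : ℂ) : ‖dslope Complex.sinh 0 w‖ ≤ 4 * Real.exp ‖w‖ := by
  have hexp1 : (1 : ℝ) ≤ Real.exp ‖w‖ := Real.one_le_exp (norm_nonneg _)
  rcases eq_or_ne w 0 with rfl | hw
  · rw [dslope_same]
    simp [Complex.deriv_sinh]
  · rw [dslope_of_ne _ hw, slope_def_field, Complex.sinh_zero, sub_zero, sub_zero]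
    rcases le_or_gt (1/2 : ℝ) ‖w‖ with h | h
    · rw [norm_div]
      have := norm_sinh_le w
      have hw0 : (0:ℝ) < ‖w‖ := lt_of_lt_of_le (by norm_num) h
      rw [div_le_iff₀ hw0]
      nlinarith [Real.exp_pos ‖w‖]
    · have hw0 : (0:ℝ) < ‖w‖ := norm_pos_iff.mpr hw
      have hsinh : Complex.sinh w = Complex.exp (-w) * (Complex.exp (2*w) - 1) / 2 := by
        show (Complex.exp w - Complex.exp (-w)) / 2 = _
        rw [mul_sub, ← Complex.exp_add]
        ring_nf
      have habs : ‖Complex.exp (2*w) - 1‖ ≤ 2 * ‖2*w‖ := by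
        have h2w : ‖2*w‖ ≤ 1 := by
          rw [norm_mul, Complex.norm_two]
          nlinarith
        simpa using Complex.norm_exp_sub_one_le h2w
      have hexpneg : ‖Complex.exp (-w)‖ ≤ Real.exp ‖w‖ := by
        rw [Complex.norm_exp]
        refine Real.exp_le_exp.mpr ?_
        have h6 := Complex.abs_re_le_norm w
        simp only [Complex.neg_re]
        cases abs_le.mp h6; linarith
      have hnum : ‖Complex.exp (-w) * (Complex.exp (2*w) - 1) / 2‖
          = ‖Complex.exp (-w)‖ * ‖Complex.exp (2*w) - 1‖ / 2 := by
        rw [norm_div, norm_mul]; norm_num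
      rw [hsinh, norm_div, hnum, div_le_iff₀ hw0]
      have h2wnorm : ‖(2:ℂ)*w‖ = 2 * ‖w‖ := by
        rw [norm_mul]; norm_num
      rw [h2wnorm] at habs
      nlinarith [norm_nonneg (Complex.exp (2*w) - 1), Real.exp_pos ‖w‖,
        norm_nonneg (Complex.exp (-w))]

/-- The correction factor appearing in the Poisson-resummed form of the SU(2) heat
kernel: `F_α(ψ) = 1 + Σ_{n≥1} e^{-4π²n²/α} (2 cosh(4πnψ/α) - (4πn/ψ) sinh(4πnψ/α))`. -/
noncomputable def Fcorr (α ψ : ℝ) : ℝ :=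
  1 + ∑' n : ℕ, Real.exp (-4 * π ^ 2 * ((n : ℝ) + 1) ^ 2 / α) *
    (2 * Real.cosh (4 * π * ((n : ℝ) + 1) * ψ / α) -
      (4 * π * ((n : ℝ) + 1) / ψ) * Real.sinh (4 * π * ((n : ℝ) + 1) * ψ / α))


noncomputable def gterm (α : ℝ) (n : ℕ) (z : ℂ) : ℂ :=
  (Real.exp (-4 * π ^ 2 * ((n : ℝ) + 1) ^ 2 / α) : ℝ) *
    (2 * Complex.cosh (((4 * π * ((n : ℝ) + 1) : ℝ) : ℂ) * z / (α : ℂ)) -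
      ((16 * π ^ 2 * ((n : ℝ) + 1) ^ 2 / α : ℝ) : ℂ) *
        dslope Complex.sinh 0 (((4 * π * ((n : ℝ) + 1) : ℝ) : ℂ) * z / (α : ℂ)))

noncomputable def gfun (α : ℝ) (z : ℂ) : ℂ := 1 + ∑' n : ℕ, gterm α n z

lemma gterm_eq_ofReal {α x : ℝ} (hα : 0 < α) (hx : 0 < x) (n : ℕ) :
    gterm α n (x : ℂ) = ((Real.exp (-4 * π ^ 2 * ((n : ℝ) + 1) ^ 2 / α) *
      (2 * Real.cosh (4 * π * ((n : ℝ) + 1) * x / α) -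
        (4 * π * ((n : ℝ) + 1) / x) * Real.sinh (4 * π * ((n : ℝ) + 1) * x / α)) : ℝ) : ℂ) := by
  have hm : (0:ℝ) < (n : ℝ) + 1 := by positivity
  have hy : (0:ℝ) < 4 * π * ((n : ℝ) + 1) * x / α := by positivity
  have harg : (((4 * π * ((n : ℝ) + 1) : ℝ) : ℂ) * (x : ℂ) / (α : ℂ))
      = ((4 * π * ((n : ℝ) + 1) * x / α : ℝ) : ℂ) := by push_cast; ring
  rw [gterm, harg, dslope_of_ne _ (Complex.ofReal_ne_zero.mpr hy.ne'), slope_def_field,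
    Complex.sinh_zero, sub_zero, sub_zero, ← Complex.ofReal_cosh, ← Complex.ofReal_sinh]
  have hx' : (x : ℂ) ≠ 0 := Complex.ofReal_ne_zero.mpr hx.ne'
  have hα' : (α : ℂ) ≠ 0 := Complex.ofReal_ne_zero.mpr hα.ne'
  have hy' : ((4 * π * ((n : ℝ) + 1) * x / α : ℝ) : ℂ) ≠ 0 := Complex.ofReal_ne_zero.mpr hy.ne'
  rw [show (4*π*((n:ℝ)+1)/x) = (16*π^2*((n:ℝ)+1)^2/α) / (4*π*((n:ℝ)+1)*x/α) by
    field_simp; ring]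
  push_cast
  ring

lemma Fcorr_eq_re {α x : ℝ} (hα : 0 < α) (hx : 0 < x) : Fcorr α x = (gfun α (x : ℂ)).re := by
  rw [gfun, tsum_congr (fun n => gterm_eq_ofReal hα hx n), ← Complex.ofReal_tsum]
  simp [Fcorr]

lemma gterm_diff (α : ℝ) (n : ℕ) : Differentiable ℂ (gterm α n) := by
  have hS : Differentiable ℂ (dslope Complex.sinh 0) := by
    rw [← differentiableOn_univ]
    exact (Complex.differentiableOn_dslope Filter.univ_mem).mpr
      Complex.differentiable_sinh.differentiableOn
  have hL : Differentiable ℂ (fun z : ℂ => ((4 * π * ((n : ℝ) + 1) : ℝ) : ℂ) * z / (α : ℂ)) :=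
    (differentiable_id.const_mul _).div_const _
  exact (differentiable_const _).mul
    (((differentiable_const _).mul (Complex.differentiable_cosh.comp hL)).sub
      ((differentiable_const _).mul (hS.comp hL)))

lemma scalar_bound {α m : ℝ} (hα : 0 < α) (hα1 : α ≤ 1) (hm1 : 1 ≤ m) {R : ℝ}
    (hR : R ≤ 4 * π * m * (7 * π / 8) / α) :
    Real.exp (-4 * π ^ 2 * m ^ 2 / α) * ((2 + 4 * (16 * π ^ 2 * m ^ 2 / α)) * Real.exp R)
      ≤ (2 + 64 * π ^ 2) * Real.exp (-m) := by
  have hπ := Real.pi_pos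
  have hπ3 := Real.pi_gt_three
  have hq4 : (1:ℝ) ≤ π ^ 2 / 4 := by nlinarith
  have hm0 : (0:ℝ) < m := by linarith
  obtain ⟨X, hX⟩ : ∃ X : ℝ, X = m ^ 2 / α := ⟨_, rfl⟩
  have hX0 : (0:ℝ) ≤ X := by rw [hX]; positivity
  have hX1 : (1:ℝ) ≤ X := by rw [hX, le_div_iff₀ hα]; nlinarith
  have hXm : m ≤ X := by rw [hX, le_div_iff₀ hα]; nlinarith
  have hpx4 : X ≤ (π ^ 2 / 4) * X := by
    calc X = 1 * X := (one_mul X).symm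
      _ ≤ (π ^ 2 / 4) * X := mul_le_mul_of_nonneg_right hq4 hX0
  have hc : 16 * π ^ 2 * m ^ 2 / α = 16 * π ^ 2 * X := by rw [hX]; ring
  have key1 : Real.exp (-4 * π ^ 2 * m ^ 2 / α) * Real.exp R
      ≤ Real.exp (-(π ^ 2 / 2) * X) := by
    rw [← Real.exp_add]
    refine Real.exp_le_exp.mpr ?_
    have hA : -4 * π ^ 2 * m ^ 2 / α + 4 * π * m * (7 * π / 8) / α ≤ -(π ^ 2 / 2) * X := by
      rw [hX, ← add_div,
        show -(π ^ 2 / 2) * (m ^ 2 / α) = (-(π ^ 2 / 2) * m ^ 2) / α from (mul_div_assoc _ _ _).symm]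
      gcongr
      nlinarith [mul_nonneg (sq_nonneg π) (by nlinarith : (0:ℝ) ≤ m ^ 2 - m)]
    linarith
  have key2 : X * Real.exp (-(π ^ 2 / 4) * X) ≤ 1 := by
    have h1 : X ≤ Real.exp (π ^ 2 / 4 * X) := by
      have := Real.add_one_le_exp (π ^ 2 / 4 * X)
      linarith
    have h2 : Real.exp (-(π ^ 2 / 4) * X) = (Real.exp (π ^ 2 / 4 * X))⁻¹ := by
      rw [← Real.exp_neg]; ring_nf
    rw [h2]
    have h3 := Real.exp_pos (π ^ 2 / 4 * X)
    have h4 : Real.exp (π ^ 2 / 4 * X) * (Real.exp (π ^ 2 / 4 * X))⁻¹ = 1 :=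
      mul_inv_cancel₀ h3.ne'
    nlinarith [inv_pos.mpr h3]
  have key3 : Real.exp (-(π ^ 2 / 4) * X) ≤ Real.exp (-m) :=
    Real.exp_le_exp.mpr (by nlinarith)
  have hsplit : Real.exp (-(π ^ 2 / 2) * X)
      = Real.exp (-(π ^ 2 / 4) * X) * Real.exp (-(π ^ 2 / 4) * X) := by
    rw [← Real.exp_add]; ring_nf
  have e1 : Real.exp (-(π ^ 2 / 2) * X) ≤ Real.exp (-m) :=
    Real.exp_le_exp.mpr (by nlinarith)
  have e2 : (0:ℝ) ≤ 64 * π ^ 2 := by positivity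
  have e3 := Real.exp_pos (-(π ^ 2 / 4) * X)
  have e5 : X * Real.exp (-(π ^ 2 / 4) * X) * Real.exp (-(π ^ 2 / 4) * X) ≤ Real.exp (-m) := by
    nlinarith [mul_nonneg hX0 e3.le]
  have e6 : 64 * π ^ 2 * (X * Real.exp (-(π ^ 2 / 4) * X) * Real.exp (-(π ^ 2 / 4) * X))
      ≤ 64 * π ^ 2 * Real.exp (-m) := mul_le_mul_of_nonneg_left e5 e2
  calc Real.exp (-4 * π ^ 2 * m ^ 2 / α) * ((2 + 4 * (16 * π ^ 2 * m ^ 2 / α)) * Real.exp R)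
      = (2 + 4 * (16 * π ^ 2 * X)) * (Real.exp (-4 * π ^ 2 * m ^ 2 / α) * Real.exp R) := by
        rw [hc]; ring
    _ ≤ (2 + 4 * (16 * π ^ 2 * X)) * Real.exp (-(π ^ 2 / 2) * X) := by
        refine mul_le_mul_of_nonneg_left key1 (by positivity)
    _ = 2 * Real.exp (-(π ^ 2 / 2) * X)
        + 64 * π ^ 2 * (X * Real.exp (-(π ^ 2 / 4) * X) * Real.exp (-(π ^ 2 / 4) * X)) := by
        rw [hsplit]; ring
    _ ≤ 2 * Real.exp (-m) + 64 * π ^ 2 * Real.exp (-m) := by linarith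
    _ = (2 + 64 * π ^ 2) * Real.exp (-m) := by ring

lemma gterm_bound {α : ℝ} (hα : 0 < α) (hα1 : α ≤ 1) (n : ℕ) {z : ℂ} (hz : ‖z‖ ≤ 7 * π / 8) :
    ‖gterm α n z‖ ≤ (2 + 64 * π ^ 2) * Real.exp (-((n : ℝ) + 1)) := by
  have hπ := Real.pi_pos
  simp only [gterm]
  generalize hm_def : ((n : ℝ) + 1) = m
  have hm1 : (1:ℝ) ≤ m := by
    rw [← hm_def]; have : (0:ℝ) ≤ (n:ℝ) := Nat.cast_nonneg n; linarith
  have hm0 : (0:ℝ) < m := by linarith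
  have hc0 : (0:ℝ) ≤ 16 * π ^ 2 * m ^ 2 / α := by positivity
  have hE0 : (0:ℝ) < Real.exp (-4 * π ^ 2 * m ^ 2 / α) := Real.exp_pos _
  have hwnorm : ‖((4 * π * m : ℝ) : ℂ) * z / (α : ℂ)‖ = 4 * π * m * ‖z‖ / α := by
    rw [norm_div, norm_mul, Complex.norm_real, Complex.norm_real,
      Real.norm_eq_abs, Real.norm_eq_abs,
      abs_of_pos (by positivity : (0:ℝ) < 4 * π * m), abs_of_pos hα]
  have hwle : ‖((4 * π * m : ℝ) : ℂ) * z / (α : ℂ)‖ ≤ 4 * π * m * (7 * π / 8) / α := by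
    rw [hwnorm]; gcongr
  have hnorm1 : ‖((Real.exp (-4 * π ^ 2 * m ^ 2 / α) : ℝ) : ℂ) *
      (2 * Complex.cosh (((4 * π * m : ℝ) : ℂ) * z / (α : ℂ)) -
        ((16 * π ^ 2 * m ^ 2 / α : ℝ) : ℂ) *
          dslope Complex.sinh 0 (((4 * π * m : ℝ) : ℂ) * z / (α : ℂ)))‖
      ≤ Real.exp (-4 * π ^ 2 * m ^ 2 / α) * ((2 + 4 * (16 * π ^ 2 * m ^ 2 / α)) *
          Real.exp ‖((4 * π * m : ℝ) : ℂ) * z / (α : ℂ)‖) := by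
    rw [norm_mul, Complex.norm_real, Real.norm_eq_abs, abs_of_pos hE0]
    have h1 : ‖(2 : ℂ) * Complex.cosh (((4 * π * m : ℝ) : ℂ) * z / (α : ℂ))‖
        ≤ 2 * Real.exp ‖((4 * π * m : ℝ) : ℂ) * z / (α : ℂ)‖ := by
      rw [norm_mul]
      have h2 : ‖(2:ℂ)‖ = 2 := by norm_num
      rw [h2]
      have := norm_cosh_le (((4 * π * m : ℝ) : ℂ) * z / (α : ℂ))
      nlinarith
    have h2 : ‖((16 * π ^ 2 * m ^ 2 / α : ℝ) : ℂ) *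
        dslope Complex.sinh 0 (((4 * π * m : ℝ) : ℂ) * z / (α : ℂ))‖
        ≤ (16 * π ^ 2 * m ^ 2 / α) *
          (4 * Real.exp ‖((4 * π * m : ℝ) : ℂ) * z / (α : ℂ)‖) := by
      rw [norm_mul, Complex.norm_real, Real.norm_eq_abs, abs_of_nonneg hc0]
      exact mul_le_mul_of_nonneg_left (norm_dslope_sinh_le _) hc0
    refine mul_le_mul_of_nonneg_left ((norm_sub_le _ _).trans ?_) hE0.le
    nlinarith [Real.exp_pos ‖((4 * π * m : ℝ) : ℂ) * z / (α : ℂ)‖]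
  exact hnorm1.trans (scalar_bound hα hα1 hm1 hwle)

lemma u_summable : Summable (fun n : ℕ => (2 + 64 * π ^ 2) * Real.exp (-((n : ℝ) + 1))) := by
  apply Summable.mul_left
  have h : (fun n : ℕ => Real.exp (-((n : ℝ) + 1)))
      = fun n : ℕ => Real.exp (-1) ^ n * Real.exp (-1) := by
    funext n
    rw [← Real.exp_nat_mul, ← Real.exp_add]
    ring_nf
  rw [h]
  exact (summable_geometric_of_lt_one (Real.exp_pos _).le
    (Real.exp_lt_one_iff.mpr (by norm_num))).mul_right _


lemma cauchy_bound : ∀ (k : ℕ) (f : ℂ → ℂ) (M : ℝ) {c : ℂ} {δ : ℝ}, 0 < δ →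
    DifferentiableOn ℂ f (ball c (((k:ℝ)+1)*δ)) →
    (∀ w ∈ ball c (((k:ℝ)+1)*δ), ‖f w‖ ≤ M) →
    ‖iteratedDeriv k f c‖ ≤ M / δ^k := by
  intro k
  induction k with
  | zero =>
    intro f M c δ hδ hf hM
    simpa using hM c (by simpa using hδ)
  | succ k ih =>
    intro f M c δ hδ hf hM
    rw [show ((((k:ℕ)+1:ℕ):ℝ)+1) = ((k:ℝ)+1+1) by push_cast; ring] at hf hM
    have hsub : ball c (((k:ℝ)+1)*δ) ⊆ ball c (((k:ℝ)+1+1)*δ) :=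
      ball_subset_ball (by nlinarith)
    have hd' : DifferentiableOn ℂ (deriv f) (ball c (((k:ℝ)+1)*δ)) :=
      (((hf.analyticOnNhd isOpen_ball).deriv).differentiableOn).mono hsub
    have hb' : ∀ w ∈ ball c (((k:ℝ)+1)*δ), ‖deriv f w‖ ≤ M / δ := by
      intro w hw
      have hcb : closedBall w δ ⊆ ball c (((k:ℝ)+1+1)*δ) := by
        intro x hx
        rw [mem_closedBall] at hx
        rw [mem_ball] at hw ⊢
        calc dist x c ≤ dist x w + dist w c := dist_triangle _ _ _
          _ < δ + ((k:ℝ)+1)*δ := by linarith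
          _ = ((k:ℝ)+1+1)*δ := by ring
      rw [← Complex.cderiv_eq_deriv isOpen_ball hf hδ hcb]
      exact Complex.norm_cderiv_le hδ fun x hx => hM x (hcb (sphere_subset_closedBall hx))
    have := ih (deriv f) (M/δ) hδ hd' hb'
    rw [iteratedDeriv_succ']
    calc ‖iteratedDeriv k (deriv f) c‖ ≤ (M/δ) / δ^k := this
      _ = M / δ^(k+1) := by rw [div_div, ← pow_succ']


lemma re_iteratedDeriv {F : ℂ → ℂ} {s : Set ℝ} {U : Set ℂ} (hs : IsOpen s) (hU : IsOpen U)
    (hF : DifferentiableOn ℂ F U) (hsubU : ∀ x ∈ s, (x:ℂ) ∈ U) {f : ℝ → ℝ}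
    (heq : ∀ x ∈ s, f x = (F x).re) :
    ∀ (j : ℕ), ∀ x ∈ s, iteratedDeriv j f x = (iteratedDeriv j F x).re := by
  have hA : ∀ j : ℕ, AnalyticOnNhd ℂ (iteratedDeriv j F) U := by
    intro j
    induction j with
    | zero => simpa [iteratedDeriv_zero] using hF.analyticOnNhd hU
    | succ j ih => rw [iteratedDeriv_succ]; exact ih.deriv
  intro j
  induction j with
  | zero => simpa [iteratedDeriv_zero] using heq
  | succ j ih =>
    intro x hx
    have h2 : iteratedDeriv j f =ᶠ[nhds x] fun t : ℝ => (iteratedDeriv j F ↑t).re :=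
      Filter.eventuallyEq_of_mem (hs.mem_nhds hx) ih
    rw [iteratedDeriv_succ, h2.deriv_eq]
    have h3 : HasDerivAt (iteratedDeriv j F) (iteratedDeriv (j+1) F ↑x) ↑x := by
      rw [iteratedDeriv_succ]
      exact ((hA j ↑x (hsubU x hx)).differentiableAt).hasDerivAt
    exact h3.real_of_complex.deriv

/-- For every `k ≥ 1` there is `K_k > 0` such that the `k`-th derivative of
`F_α` in `ψ` satisfies `|F_α^{(k)}(ψ)| ≤ K_k · α^{(1-k)/2}` for all `α ∈ (0,1]`
and `ψ ∈ (0, 3π/4]`. -/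
theorem stmt11 (k : ℕ) (hk : 1 ≤ k) :
    ∃ K > (0 : ℝ), ∀ α ∈ Set.Ioc (0 : ℝ) 1, ∀ ψ ∈ Set.Ioc (0 : ℝ) (3 * π / 4),
      |iteratedDeriv k (Fcorr α) ψ| ≤ K * α ^ ((1 - (k : ℝ)) / 2) := by
  have hπ := Real.pi_pos
  obtain ⟨T, hT⟩ : ∃ T : ℝ, T = ∑' n : ℕ, (2 + 64 * π ^ 2) * Real.exp (-((n : ℝ) + 1)) := ⟨_, rfl⟩
  have hT0 : 0 ≤ T := by
    rw [hT]; exact tsum_nonneg fun n => by positivity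
  obtain ⟨δ, hδdef⟩ : ∃ δ : ℝ, δ = π / (8 * ((k : ℝ) + 1)) := ⟨_, rfl⟩
  have hδ : 0 < δ := by rw [hδdef]; positivity
  have hk1 : (0:ℝ) < (k : ℝ) + 1 := by positivity
  have hkδ : ((k : ℝ) + 1) * δ = π / 8 := by
    rw [hδdef]; field_simp
  refine ⟨(1 + T) / δ ^ k, by positivity, ?_⟩
  rintro α ⟨hα0, hα1⟩ ψ ⟨hψ0, hψ1⟩
  have hψ78 : ψ < 7 * π / 8 := by nlinarith
  -- the complex function
  have hdiffU : DifferentiableOn ℂ (gfun α) (Metric.ball (0:ℂ) (7 * π / 8)) := by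
    refine (differentiableOn_const (1:ℂ)).add ?_
    exact Complex.differentiableOn_tsum_of_summable_norm u_summable
      (fun n => (gterm_diff α n).differentiableOn) Metric.isOpen_ball
      (fun n w hw => gterm_bound hα0 hα1 n (mem_ball_zero_iff.mp hw).le)
  have hboundU : ∀ w ∈ Metric.ball (0:ℂ) (7 * π / 8), ‖gfun α w‖ ≤ 1 + T := by
    intro w hw
    rw [gfun]
    refine (norm_add_le _ _).trans ?_
    have h1 : ‖(1:ℂ)‖ = 1 := by norm_num
    have h2 : ‖∑' n : ℕ, gterm α n w‖ ≤ T := by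
      rw [hT]
      exact tsum_of_norm_bounded u_summable.hasSum
        (fun n => gterm_bound hα0 hα1 n (mem_ball_zero_iff.mp hw).le)
    rw [h1]
    linarith
  -- Cauchy estimate at ψ
  have hsubU : Metric.ball (ψ:ℂ) (((k : ℝ) + 1) * δ) ⊆ Metric.ball (0:ℂ) (7 * π / 8) := by
    intro z hz
    rw [Metric.mem_ball] at hz ⊢
    have h1 : dist z 0 ≤ dist z (ψ:ℂ) + dist (ψ:ℂ) 0 := dist_triangle _ _ _
    have h2 : dist (ψ:ℂ) 0 = ψ := by
      rw [Complex.dist_eq, sub_zero, Complex.norm_real, Real.norm_eq_abs, abs_of_pos hψ0]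
    rw [hkδ] at hz
    rw [h2] at h1
    nlinarith
  have hC : ‖iteratedDeriv k (gfun α) (ψ:ℂ)‖ ≤ (1 + T) / δ ^ k :=
    cauchy_bound k (gfun α) (1 + T) hδ (hdiffU.mono hsubU)
      (fun w hw => hboundU w (hsubU hw))
  -- transfer to the real function
  have hmem : ∀ x ∈ Set.Ioo (0:ℝ) (7 * π / 8), (x:ℂ) ∈ Metric.ball (0:ℂ) (7 * π / 8) := by
    intro x hx
    rw [mem_ball_zero_iff, Complex.norm_real, Real.norm_eq_abs, abs_of_pos hx.1]
    exact hx.2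
  have heq : ∀ x ∈ Set.Ioo (0:ℝ) (7 * π / 8), Fcorr α x = (gfun α (x:ℂ)).re :=
    fun x hx => Fcorr_eq_re hα0 hx.1
  have htrans := re_iteratedDeriv isOpen_Ioo Metric.isOpen_ball hdiffU hmem heq k ψ
    ⟨hψ0, hψ78⟩
  -- conclude
  have hrpow : 1 ≤ α ^ ((1 - (k : ℝ)) / 2) := by
    refine Real.one_le_rpow_of_pos_of_le_one_of_nonpos hα0 hα1 ?_
    have hk' : (1:ℝ) ≤ (k : ℝ) := by exact_mod_cast hk
    linarith
  have habs : |iteratedDeriv k (Fcorr α) ψ| ≤ ‖iteratedDeriv k (gfun α) (ψ:ℂ)‖ := by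
    rw [htrans]
    exact Complex.abs_re_le_norm _
  calc |iteratedDeriv k (Fcorr α) ψ| ≤ (1 + T) / δ ^ k := habs.trans hC
    _ = (1 + T) / δ ^ k * 1 := (mul_one _).symm
    _ ≤ (1 + T) / δ ^ k * α ^ ((1 - (k : ℝ)) / 2) := by
        refine mul_le_mul_of_nonneg_left hrpow (by positivity)
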